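/- arXiv:2001.00625 — 2 statements merged into one kernel-verified Lean document; each statement's English description precedes it below -/
import Mathlib

section
/- Let n ≥ 2. The monoid presented by generators e_{i,j} for i < j in [±n], subject to the relations (SP1) e_{i,j}·e_{i,j} = e_{i,j}; (SP2) e_{i,j}·e_{r,s} = e_{r,s}·e_{i,j} for all i < j and r < s; (SP3) e_{i,j}·e_{j,k} = e_{i,j}·e_{i,k} = e_{i,k}·e_{j,k} for all i < j < k in [±n]; (SP4) e_{i,j} = e_{−j,−i} for all i < j, is isomorphic as a monoid to the monoid SP_n of signed partitions of [±n], via an isomorphism sending the generator e_{i,j} to ε_{i,j}. -/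
instance setoidCommMonoid (α : Type*) : CommMonoid (Setoid α) where
  mul := (· ⊔ ·)
  one := ⊥
  mul_assoc := sup_assoc
  one_mul := bot_sup_eq
  mul_one := sup_bot_eq
  mul_comm := sup_comm

def muSet {α : Type*} (X : Set α) : Setoid α :=
  Relation.EqvGen.setoid (fun x y => x ∈ X ∧ y ∈ X)

def mu {α : Type*} (i j : α) : Setoid α := muSet {i, j}

/-- `[±n]`: nonzero integers of absolute value at most `n`, with the order from `ℤ`. -/
abbrev PM (n : ℕ) := {k : ℤ // k ≠ 0 ∧ |k| ≤ (n : ℤ)}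

namespace PM

/-- The negation involution `k ↦ -k` on `[±n]`. -/
def neg {n : ℕ} (x : PM n) : PM n :=
  ⟨-x.1, by obtain ⟨h1, h2⟩ := x.2; exact ⟨neg_ne_zero.mpr h1, by rwa [abs_neg]⟩⟩

@[simp] theorem neg_neg {n : ℕ} (x : PM n) : x.neg.neg = x := Subtype.ext (by simp [neg])

theorem neg_lt_neg {n : ℕ} {x y : PM n} (h : x < y) : y.neg < x.neg := by
  have h' : x.1 < y.1 := Subtype.coe_lt_coe.mpr h
  rw [← Subtype.coe_lt_coe]
  show -y.1 < -x.1
  omega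

theorem neg_lt_pos {n : ℕ} {x y : PM n} (hx : 0 < x.1) (hy : 0 < y.1) : x.neg < y := by
  rw [← Subtype.coe_lt_coe]
  show -x.1 < y.1
  omega

theorem pos_ne_neg {n : ℕ} {x y : PM n} (hx : 0 < x.1) (hy : 0 < y.1) : y ≠ x.neg := by
  intro h
  have : y.1 = -x.1 := congrArg Subtype.val h
  omega

theorem neg_lt_self {n : ℕ} {x : PM n} (hx : 0 < x.1) : x.neg < x := neg_lt_pos hx hx

/-- The absolute value map `x ↦ |x|` from `[±n]` to its positive part. -/
def abs {n : ℕ} (x : PM n) : PM n :=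
  ⟨|x.1|, by obtain ⟨h1, h2⟩ := x.2; exact ⟨abs_ne_zero.mpr h1, by rwa [abs_abs]⟩⟩

end PM

/-- Image of a subset of `[±n]` under negation. -/
def negSet {n : ℕ} (K : Set (PM n)) : Set (PM n) := PM.neg '' K

/-- The partition `I⁻` transported along negation: `x ∼ y` in `negPart I` iff `-x ∼ -y` in `I`. -/
def negPart {n : ℕ} (I : Setoid (PM n)) : Setoid (PM n) := Setoid.comap PM.neg I

/-- A set partition `I` of `[±n]` is *signed* if for every block `K` of `I` the set `-K` is
also a block; equivalently, `x ∼ y ↔ -x ∼ -y` for all `x, y`. -/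
def IsSigned {n : ℕ} (I : Setoid (PM n)) : Prop :=
  ∀ x y : PM n, I x y ↔ I (PM.neg x) (PM.neg y)

/-- A *zero block* of a partition `I` is a block `K` with `-K = K`. -/
def IsZeroBlock {n : ℕ} (I : Setoid (PM n)) (K : Set (PM n)) : Prop :=
  K ∈ I.classes ∧ negSet K = K

/-- A `Bₙ`-partition: a signed partition of `[±n]` with at most one zero block. -/
def IsBPart {n : ℕ} (I : Setoid (PM n)) : Prop :=
  IsSigned I ∧ Set.Subsingleton {K | IsZeroBlock I K}

/-- A *restricted* signed partition: all its zero blocks have more than two elements. -/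
def IsRestricted {n : ℕ} (I : Setoid (PM n)) : Prop :=
  IsSigned I ∧ ∀ K : Set (PM n), IsZeroBlock I K → 2 < K.ncard

/-- A `Dₙ`-partition: a `Bₙ`-partition whose zero block (if present) has more than two
elements. -/
def IsDPart {n : ℕ} (I : Setoid (PM n)) : Prop :=
  IsBPart I ∧ ∀ K : Set (PM n), IsZeroBlock I K → 2 < K.ncard

/-- For `i < j` in `[±n]`, the signed partition `ε_{i,j} = μ_{-j,-i} ⊔ μ_{i,j}`. -/
def eps {n : ℕ} (i j : PM n) : Setoid (PM n) := mu (PM.neg j) (PM.neg i) ⊔ mu i j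

/-- Generators `e_{i,j}` for `i < j` in `[±n]`. -/
abbrev SGen (n : ℕ) := {p : PM n × PM n // p.1 < p.2}

open FreeMonoid in
/-- The defining relations (SP1)–(SP4) of the monoid of signed partitions. -/
inductive SRel (n : ℕ) : FreeMonoid (SGen n) → FreeMonoid (SGen n) → Prop
  /-- (SP1) `e_{i,j} e_{i,j} = e_{i,j}`. -/
  | SP1 (a : SGen n) : SRel n (of a * of a) (of a)
  /-- (SP2) `e_{i,j} e_{r,s} = e_{r,s} e_{i,j}`. -/
  | SP2 (a b : SGen n) : SRel n (of a * of b) (of b * of a)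
  /-- (SP3), first equality: `e_{i,j} e_{j,k} = e_{i,j} e_{i,k}` for `i < j < k`. -/
  | SP3a (i j k : PM n) (hij : i < j) (hjk : j < k) :
      SRel n (of ⟨(i, j), hij⟩ * of ⟨(j, k), hjk⟩)
        (of ⟨(i, j), hij⟩ * of ⟨(i, k), hij.trans hjk⟩)
  /-- (SP3), second equality: `e_{i,j} e_{j,k} = e_{i,k} e_{j,k}` for `i < j < k`. -/
  | SP3b (i j k : PM n) (hij : i < j) (hjk : j < k) :
      SRel n (of ⟨(i, j), hij⟩ * of ⟨(j, k), hjk⟩)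
        (of ⟨(i, k), hij.trans hjk⟩ * of ⟨(j, k), hjk⟩)
  /-- (SP4) `e_{i,j} = e_{-j,-i}`. -/
  | SP4 (i j : PM n) (hij : i < j) :
      SRel n (of ⟨(i, j), hij⟩) (of ⟨(PM.neg j, PM.neg i), PM.neg_lt_neg hij⟩)

/-! ### Auxiliary development -/

section SetoidAux

variable {α : Type*}

theorem setoid_mul_def (I J : Setoid α) : I * J = I ⊔ J := rfl

theorem muSet_le {X : Set α} {I : Setoid α} :
    muSet X ≤ I ↔ ∀ x ∈ X, ∀ y ∈ X, I x y := by
  constructor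
  · intro h x hx y hy
    exact Setoid.le_def.mp h (Relation.EqvGen.rel _ _ ⟨hx, hy⟩)
  · intro h
    exact Setoid.eqvGen_le (fun x y hxy => h x hxy.1 y hxy.2)

theorem mu_le {i j : α} {I : Setoid α} : mu i j ≤ I ↔ I i j := by
  rw [mu, muSet_le]
  constructor
  · intro h
    exact h i (by simp) j (by simp)
  · intro h x hx y hy
    simp only [Set.mem_insert_iff, Set.mem_singleton_iff] at hx hy
    rcases hx with rfl | rfl <;> rcases hy with rfl | rfl
    · exact I.refl _
    · exact h
    · exact I.symm h
    · exact I.refl _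

theorem mu_rel_self (i j : α) : mu i j i j :=
  Relation.EqvGen.rel _ _ ⟨by simp, by simp⟩

theorem rel_of_le {I J : Setoid α} (h : I ≤ J) {x y : α} (hxy : I x y) : J x y :=
  Setoid.le_def.mp h hxy

theorem mu_eq_eqvGen (i j : α) :
    mu i j = Relation.EqvGen.setoid (fun x y => x ∈ ({i, j} : Set α) ∧ y ∈ ({i, j} : Set α)) :=
  rfl

end SetoidAux

section EpsAux

variable {n : ℕ}

theorem eps_le {i j : PM n} {I : Setoid (PM n)} :
    eps i j ≤ I ↔ I (PM.neg j) (PM.neg i) ∧ I i j := by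
  rw [eps, sup_le_iff, mu_le, mu_le]

theorem eps_rel_self (i j : PM n) : eps i j i j :=
  rel_of_le (le_sup_right : mu i j ≤ eps i j) (mu_rel_self i j)

theorem eps_rel_neg (i j : PM n) : eps i j (PM.neg j) (PM.neg i) :=
  rel_of_le (le_sup_left : mu (PM.neg j) (PM.neg i) ≤ eps i j) (mu_rel_self _ _)

theorem eps_neg (i j : PM n) : eps i j = eps (PM.neg j) (PM.neg i) := by
  rw [eps, eps, PM.neg_neg, PM.neg_neg, sup_comm]

theorem eps_le_of {i j : PM n} {S : Setoid (PM n)} (h1 : S i j)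
    (h2 : S (PM.neg i) (PM.neg j)) : eps i j ≤ S :=
  eps_le.mpr ⟨S.symm' h2, h1⟩

theorem eps_key {p q r : PM n} : eps p q ≤ eps p r ⊔ eps r q := by
  set S := eps p r ⊔ eps r q with hS
  have h1 : eps p r ≤ S := le_sup_left
  have h2 : eps r q ≤ S := le_sup_right
  refine eps_le_of (S.trans' (rel_of_le h1 (eps_rel_self p r)) (rel_of_le h2 (eps_rel_self r q))) ?_
  exact S.trans' (S.symm' (rel_of_le h1 (eps_rel_neg p r)))
    (S.symm' (rel_of_le h2 (eps_rel_neg r q)))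

theorem eps_swap_le {i j : PM n} {S : Setoid (PM n)} (h : eps i j ≤ S) : eps j i ≤ S := by
  refine eps_le_of (S.symm' (rel_of_le h (eps_rel_self i j))) ?_
  exact rel_of_le h (eps_rel_neg i j)

theorem eps_sp3a {i j k : PM n} :
    eps i j ⊔ eps j k = eps i j ⊔ eps i k := by
  apply le_antisymm <;> rw [sup_le_iff]
  · refine ⟨le_sup_left, le_trans (eps_key (r := i)) ?_⟩
    rw [sup_le_iff]
    exact ⟨eps_swap_le le_sup_left, le_sup_right⟩
  · refine ⟨le_sup_left, le_trans (eps_key (r := j)) ?_⟩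
    rw [sup_le_iff]
    exact ⟨le_sup_left, le_sup_right⟩

theorem eps_sp3b {i j k : PM n} :
    eps i j ⊔ eps j k = eps i k ⊔ eps j k := by
  apply le_antisymm <;> rw [sup_le_iff]
  · refine ⟨le_trans (eps_key (r := k)) ?_, le_sup_right⟩
    rw [sup_le_iff]
    exact ⟨le_sup_left, eps_swap_le le_sup_right⟩
  · refine ⟨le_trans (eps_key (r := j)) ?_, le_sup_right⟩
    rw [sup_le_iff]
    exact ⟨le_sup_left, le_sup_right⟩

end EpsAux
section PhiAux

variable {n : ℕ}

/-- The map sending a generator to its partition. -/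
def epsf : SGen n → Setoid (PM n) := fun a => eps a.1.1 a.1.2

theorem srel_lift : ∀ u v : FreeMonoid (SGen n), SRel n u v →
    FreeMonoid.lift epsf u = FreeMonoid.lift epsf v := by
  intro u v h
  induction h with
  | SP1 a =>
    simp only [map_mul, FreeMonoid.lift_eval_of, setoid_mul_def]
    exact sup_idem _
  | SP2 a b =>
    simp only [map_mul, FreeMonoid.lift_eval_of, setoid_mul_def]
    exact sup_comm _ _
  | SP3a i j k hij hjk =>
    simp only [map_mul, FreeMonoid.lift_eval_of, setoid_mul_def]
    exact eps_sp3a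
  | SP3b i j k hij hjk =>
    simp only [map_mul, FreeMonoid.lift_eval_of, setoid_mul_def]
    exact eps_sp3b
  | SP4 i j hij =>
    simp only [FreeMonoid.lift_eval_of]
    exact eps_neg i j

/-- The homomorphism from the presented monoid. -/
def phi : PresentedMonoid (SRel n) →* Setoid (PM n) :=
  PresentedMonoid.lift epsf srel_lift

/-- The base relation of a generator. -/
def gbase (a : SGen n) : PM n → PM n → Prop := fun x y =>
  (x ∈ ({a.1.1, a.1.2} : Set (PM n)) ∧ y ∈ ({a.1.1, a.1.2} : Set (PM n))) ∨
  (x ∈ ({PM.neg a.1.2, PM.neg a.1.1} : Set (PM n)) ∧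
    y ∈ ({PM.neg a.1.2, PM.neg a.1.1} : Set (PM n)))

theorem epsf_eq_eqvGen (a : SGen n) : epsf a = Relation.EqvGen.setoid (gbase a) := by
  apply le_antisymm
  · apply sup_le
    · exact Setoid.eqvGen_mono fun x y h => Or.inr h
    · exact Setoid.eqvGen_mono fun x y h => Or.inl h
  · apply Setoid.eqvGen_le
    intro x y h
    rcases h with h | h
    · exact rel_of_le (le_sup_right : mu a.1.1 a.1.2 ≤ epsf a) (Relation.EqvGen.rel _ _ h)
    · exact rel_of_le (le_sup_left : mu (PM.neg a.1.2) (PM.neg a.1.1) ≤ epsf a)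
        (Relation.EqvGen.rel _ _ h)

/-- The union of base relations over the letters of a word. -/
def wordRel (u : FreeMonoid (SGen n)) : PM n → PM n → Prop := fun x y =>
  ∃ a ∈ u.toList, gbase a x y

theorem lift_epsf_eq (u : FreeMonoid (SGen n)) :
    FreeMonoid.lift epsf u = Relation.EqvGen.setoid (wordRel u) := by
  induction u using FreeMonoid.inductionOn' with
  | one =>
    rw [map_one]
    have h1 : wordRel (n := n) 1 = ⊥ := by
      funext x y
      simp only [wordRel, eq_iff_iff]
      constructor
      · rintro ⟨a, ha, -⟩; exact absurd ha List.not_mem_nil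
      · intro h; exact absurd h (by simp [Pi.bot_apply])
    rw [h1, Setoid.gi.gc.l_bot]
    rfl
  | of_mul b u ih =>
    rw [map_mul, FreeMonoid.lift_eval_of, setoid_mul_def, epsf_eq_eqvGen, ih,
      ← Setoid.gi.gc.l_sup]
    congr 1
    funext x y
    simp only [wordRel, Pi.sup_apply, sup_Prop_eq, eq_iff_iff, FreeMonoid.toList_of_mul,
      List.mem_cons]
    constructor
    · rintro (h | ⟨a, ha, h⟩)
      · exact ⟨b, Or.inl rfl, h⟩
      · exact ⟨a, Or.inr ha, h⟩
    · rintro ⟨a, rfl | ha, h⟩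
      · exact Or.inl h
      · exact Or.inr ⟨a, ha, h⟩

end PhiAux
section Signed

variable {n : ℕ}

theorem gbase_neg {a : SGen n} {x y : PM n} (h : gbase a x y) :
    gbase a (PM.neg x) (PM.neg y) := by
  have mem1 : ∀ z : PM n, z ∈ ({a.1.1, a.1.2} : Set (PM n)) →
      PM.neg z ∈ ({PM.neg a.1.2, PM.neg a.1.1} : Set (PM n)) := by
    rintro z (rfl | rfl) <;> simp [Set.mem_insert_iff]
  have mem2 : ∀ z : PM n, z ∈ ({PM.neg a.1.2, PM.neg a.1.1} : Set (PM n)) →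
      PM.neg z ∈ ({a.1.1, a.1.2} : Set (PM n)) := by
    rintro z (rfl | rfl) <;> simp [Set.mem_insert_iff, PM.neg_neg]
  rcases h with ⟨hx, hy⟩ | ⟨hx, hy⟩
  · exact Or.inr ⟨mem1 _ hx, mem1 _ hy⟩
  · exact Or.inl ⟨mem2 _ hx, mem2 _ hy⟩

theorem eqvGen_neg {r : PM n → PM n → Prop} (hr : ∀ x y, r x y → r (PM.neg x) (PM.neg y))
    {x y : PM n} (h : Relation.EqvGen r x y) :
    Relation.EqvGen r (PM.neg x) (PM.neg y) := by
  induction h with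
  | rel x y hxy => exact Relation.EqvGen.rel _ _ (hr _ _ hxy)
  | refl x => exact Relation.EqvGen.refl _
  | symm x y h ih => exact ih.symm _ _
  | trans x y z h1 h2 ih1 ih2 => exact ih1.trans _ _ _ ih2

theorem isSigned_eqvGen {r : PM n → PM n → Prop}
    (hr : ∀ x y, r x y → r (PM.neg x) (PM.neg y)) :
    IsSigned (Relation.EqvGen.setoid r) := by
  intro x y
  constructor
  · exact fun h => eqvGen_neg hr h
  · intro h
    have := eqvGen_neg hr h
    rwa [PM.neg_neg, PM.neg_neg] at this

theorem isSigned_phi (x : PresentedMonoid (SRel n)) : IsSigned (phi x) := by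
  induction x using PresentedMonoid.inductionOn with
  | _ u =>
    have : phi (PresentedMonoid.mk (SRel n) u) = FreeMonoid.lift epsf u := rfl
    rw [this, lift_epsf_eq]
    exact isSigned_eqvGen (fun x y ⟨a, ha, hb⟩ => ⟨a, ha, gbase_neg hb⟩)

end Signed

section PMon

variable {n : ℕ}

theorem mk_sound {u v : FreeMonoid (SGen n)} (h : conGen (SRel n) u v) :
    PresentedMonoid.mk (SRel n) u = PresentedMonoid.mk (SRel n) v :=
  Quotient.sound h

theorem mk_of (a : SGen n) :
    PresentedMonoid.mk (SRel n) (FreeMonoid.of a) = PresentedMonoid.of (SRel n) a := rfl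

theorem P_of_idem (a : SGen n) :
    PresentedMonoid.of (SRel n) a * PresentedMonoid.of (SRel n) a
      = PresentedMonoid.of (SRel n) a :=
  mk_sound (ConGen.Rel.of _ _ (SRel.SP1 a))

theorem P_of_comm (a b : SGen n) :
    PresentedMonoid.of (SRel n) a * PresentedMonoid.of (SRel n) b
      = PresentedMonoid.of (SRel n) b * PresentedMonoid.of (SRel n) a :=
  mk_sound (ConGen.Rel.of _ _ (SRel.SP2 a b))

theorem P_of_neg {i j : PM n} (h : i < j) :
    PresentedMonoid.of (SRel n) ⟨(i, j), h⟩
      = PresentedMonoid.of (SRel n) ⟨(PM.neg j, PM.neg i), PM.neg_lt_neg h⟩ :=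
  mk_sound (ConGen.Rel.of _ _ (SRel.SP4 i j h))

theorem P_sp3a {i j k : PM n} (hij : i < j) (hjk : j < k) :
    PresentedMonoid.of (SRel n) ⟨(i, j), hij⟩ * PresentedMonoid.of (SRel n) ⟨(j, k), hjk⟩
      = PresentedMonoid.of (SRel n) ⟨(i, j), hij⟩
        * PresentedMonoid.of (SRel n) ⟨(i, k), hij.trans hjk⟩ :=
  mk_sound (ConGen.Rel.of _ _ (SRel.SP3a i j k hij hjk))

theorem P_sp3b {i j k : PM n} (hij : i < j) (hjk : j < k) :
    PresentedMonoid.of (SRel n) ⟨(i, j), hij⟩ * PresentedMonoid.of (SRel n) ⟨(j, k), hjk⟩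
      = PresentedMonoid.of (SRel n) ⟨(i, k), hij.trans hjk⟩
        * PresentedMonoid.of (SRel n) ⟨(j, k), hjk⟩ :=
  mk_sound (ConGen.Rel.of _ _ (SRel.SP3b i j k hij hjk))

theorem P_of_mul_comm (a : SGen n) (x : PresentedMonoid (SRel n)) :
    PresentedMonoid.of (SRel n) a * x = x * PresentedMonoid.of (SRel n) a := by
  induction x using PresentedMonoid.inductionOn with
  | _ u =>
    induction u using FreeMonoid.inductionOn' with
    | one => rw [map_one, mul_one, one_mul]
    | of_mul b v ih =>
      rw [map_mul, mk_of, ← mul_assoc, P_of_comm a b, mul_assoc, ih, ← mul_assoc]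

instance : CommMonoid (PresentedMonoid (SRel n)) :=
  { (inferInstance : Monoid (PresentedMonoid (SRel n))) with
    mul_comm := by
      intro x y
      induction x using PresentedMonoid.inductionOn with
      | _ u =>
        induction u using FreeMonoid.inductionOn' with
        | one => rw [map_one, mul_one, one_mul]
        | of_mul b v ih =>
          rw [map_mul, mk_of, mul_assoc, ih, ← mul_assoc, P_of_mul_comm b y, mul_assoc] }

end PMon
section Gsym

variable {n : ℕ}

/-- The symmetrized generator. -/
noncomputable def gsym (x y : PM n) : PresentedMonoid (SRel n) :=
  if h : x < y then PresentedMonoid.of (SRel n) ⟨(x, y), h⟩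
  else if h' : y < x then PresentedMonoid.of (SRel n) ⟨(y, x), h'⟩ else 1

theorem gsym_of {x y : PM n} (h : x < y) :
    gsym x y = PresentedMonoid.of (SRel n) ⟨(x, y), h⟩ := dif_pos h

theorem gsym_of' {x y : PM n} (h : y < x) :
    gsym x y = PresentedMonoid.of (SRel n) ⟨(y, x), h⟩ := by
  rw [gsym, dif_neg (asymm h), dif_pos h]

theorem gsym_comm (x y : PM n) : gsym x y = gsym y x := by
  rcases lt_trichotomy x y with h | h | h
  · rw [gsym_of h, gsym_of' h]
  · subst h; rfl
  · rw [gsym_of' h, gsym_of h]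

theorem gsym_self (x : PM n) : gsym x x = 1 := by
  rw [gsym, dif_neg (lt_irrefl x), dif_neg (lt_irrefl x)]

theorem gsym_neg (x y : PM n) : gsym x y = gsym (PM.neg x) (PM.neg y) := by
  rcases lt_trichotomy x y with h | h | h
  · rw [gsym_of h, P_of_neg h, gsym_comm, gsym_of (PM.neg_lt_neg h)]
  · subst h; rw [gsym_self, gsym_self]
  · rw [gsym_of' h, P_of_neg h, gsym_of (PM.neg_lt_neg h)]

theorem gsym_triangle {x y z : PM n} (hxy : x ≠ y) (hyz : y ≠ z) (hxz : x ≠ z) :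
    gsym x y * gsym y z * gsym x z = gsym x y * gsym y z := by
  -- sorted core identities
  have A1 : ∀ {i j k : PM n} (hij : i < j) (hjk : j < k),
      PresentedMonoid.of (SRel n) ⟨(i, j), hij⟩ * PresentedMonoid.of (SRel n) ⟨(j, k), hjk⟩
        * PresentedMonoid.of (SRel n) ⟨(i, k), hij.trans hjk⟩
      = PresentedMonoid.of (SRel n) ⟨(i, j), hij⟩ * PresentedMonoid.of (SRel n) ⟨(j, k), hjk⟩ := by
    intro i j k hij hjk
    rw [P_sp3a hij hjk, mul_assoc, P_of_idem]
  have A2 : ∀ {i j k : PM n} (hij : i < j) (hjk : j < k),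
      PresentedMonoid.of (SRel n) ⟨(i, j), hij⟩
        * PresentedMonoid.of (SRel n) ⟨(i, k), hij.trans hjk⟩
        * PresentedMonoid.of (SRel n) ⟨(j, k), hjk⟩
      = PresentedMonoid.of (SRel n) ⟨(i, j), hij⟩
        * PresentedMonoid.of (SRel n) ⟨(i, k), hij.trans hjk⟩ := by
    intro i j k hij hjk
    rw [← P_sp3a hij hjk, mul_assoc, P_of_idem]
  have A3 : ∀ {i j k : PM n} (hij : i < j) (hjk : j < k),
      PresentedMonoid.of (SRel n) ⟨(i, k), hij.trans hjk⟩
        * PresentedMonoid.of (SRel n) ⟨(j, k), hjk⟩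
        * PresentedMonoid.of (SRel n) ⟨(i, j), hij⟩
      = PresentedMonoid.of (SRel n) ⟨(i, k), hij.trans hjk⟩
        * PresentedMonoid.of (SRel n) ⟨(j, k), hjk⟩ := by
    intro i j k hij hjk
    rw [← P_sp3b hij hjk, mul_right_comm, P_of_idem]
  rcases lt_trichotomy x y with h1 | h1 | h1
  · rcases lt_trichotomy y z with h2 | h2 | h2
    · -- x < y < z
      rw [gsym_of h1, gsym_of h2, gsym_of (h1.trans h2)]
      exact A1 h1 h2
    · exact absurd h2 hyz
    · rcases lt_trichotomy x z with h3 | h3 | h3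
      · -- x < z < y
        rw [gsym_of h1, gsym_of' h2, gsym_of h3]
        exact A3 h3 h2
      · exact absurd h3 hxz
      · -- z < x < y
        rw [gsym_of h1, gsym_of' h2, gsym_of' h3]
        rw [mul_comm (PresentedMonoid.of (SRel n) ⟨(x, y), h1⟩)
          (PresentedMonoid.of (SRel n) ⟨(z, y), h2⟩)]
        exact A3 h3 h1
  · exact absurd h1 hxy
  · rcases lt_trichotomy y z with h2 | h2 | h2
    · rcases lt_trichotomy x z with h3 | h3 | h3
      · -- y < x < z
        rw [gsym_of' h1, gsym_of h2, gsym_of h3]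
        exact A2 h1 h3
      · exact absurd h3 hxz
      · -- y < z < x
        rw [gsym_of' h1, gsym_of h2, gsym_of' h3]
        rw [mul_comm (PresentedMonoid.of (SRel n) ⟨(y, x), h1⟩)
          (PresentedMonoid.of (SRel n) ⟨(y, z), h2⟩)]
        exact A2 h2 h3
    · exact absurd h2 hyz
    · -- z < y < x
      rw [gsym_of' h1, gsym_of' h2, gsym_of' (h2.trans h1)]
      rw [mul_comm (PresentedMonoid.of (SRel n) ⟨(y, x), h1⟩)
        (PresentedMonoid.of (SRel n) ⟨(z, y), h2⟩)]
      exact A1 h2 h1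

end Gsym
section Absorb

variable {n : ℕ}

theorem gsym_eq_of_gbase {a : SGen n} {x y : PM n} (hb : gbase a x y) (hxy : x ≠ y) :
    gsym x y = PresentedMonoid.of (SRel n) a := by
  have hpos : ∀ {p q : PM n}, p ∈ ({a.1.1, a.1.2} : Set (PM n)) →
      q ∈ ({a.1.1, a.1.2} : Set (PM n)) → p ≠ q →
      gsym p q = PresentedMonoid.of (SRel n) a := by
    rintro p q (rfl | rfl) (rfl | rfl) hpq
    · exact absurd rfl hpq
    · rw [gsym_of a.2]
    · rw [gsym_comm, gsym_of a.2]
    · exact absurd rfl hpq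
  rcases hb with ⟨hx, hy⟩ | ⟨hx, hy⟩
  · exact hpos hx hy hxy
  · have hneg : ∀ {p : PM n}, p ∈ ({PM.neg a.1.2, PM.neg a.1.1} : Set (PM n)) →
        PM.neg p ∈ ({a.1.1, a.1.2} : Set (PM n)) := by
      rintro p (rfl | rfl) <;> simp [Set.mem_insert_iff, PM.neg_neg]
    have hne : PM.neg x ≠ PM.neg y := by
      intro h
      apply hxy
      have := congrArg PM.neg h
      rwa [PM.neg_neg, PM.neg_neg] at this
    rw [gsym_neg x y]
    exact hpos (hneg hx) (hneg hy) hne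

theorem P_absorb_letter {u : FreeMonoid (SGen n)} {a : SGen n} (h : a ∈ u.toList) :
    PresentedMonoid.mk (SRel n) u * PresentedMonoid.of (SRel n) a
      = PresentedMonoid.mk (SRel n) u := by
  induction u using FreeMonoid.inductionOn' with
  | one => exact absurd h List.not_mem_nil
  | of_mul b v ih =>
    rw [FreeMonoid.toList_of_mul, List.mem_cons] at h
    rcases h with rfl | h
    · rw [map_mul, mk_of, mul_right_comm, P_of_idem]
    · rw [map_mul, mul_assoc, ih h]

theorem P_absorb {u : FreeMonoid (SGen n)} {x y : PM n}
    (h : Relation.EqvGen (wordRel u) x y) (hxy : x ≠ y) :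
    PresentedMonoid.mk (SRel n) u * gsym x y = PresentedMonoid.mk (SRel n) u := by
  induction h with
  | rel x y hr =>
    obtain ⟨a, ha, hb⟩ := hr
    rw [gsym_eq_of_gbase hb hxy]
    exact P_absorb_letter ha
  | refl x => exact absurd rfl hxy
  | symm x y h ih => rw [gsym_comm]; exact ih (Ne.symm hxy)
  | trans x y z h1 h2 ih1 ih2 =>
    by_cases hxy' : x = y
    · subst hxy'; exact ih2 hxy
    by_cases hyz : y = z
    · subst hyz; exact ih1 hxy
    have e1 := ih1 hxy'
    have e2 := ih2 hyz
    have tri := gsym_triangle hxy' hyz hxy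
    calc PresentedMonoid.mk (SRel n) u * gsym x z
        = (PresentedMonoid.mk (SRel n) u * gsym x y * gsym y z) * gsym x z := by
          rw [e1, e2]
      _ = PresentedMonoid.mk (SRel n) u * (gsym x y * gsym y z * gsym x z) := by
          simp only [mul_assoc]
      _ = PresentedMonoid.mk (SRel n) u * (gsym x y * gsym y z) := by rw [tri]
      _ = PresentedMonoid.mk (SRel n) u := by rw [← mul_assoc, e1, e2]

end Absorb
section Canon

variable {n : ℕ}

noncomputable instance : Fintype (PM n) :=
  Fintype.ofInjective
    (fun x : PM n => (⟨x.1, by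
      rw [Finset.mem_Icc]
      have h := abs_le.mp x.2.2
      exact h⟩ : (Finset.Icc (-(n : ℤ)) (n : ℤ))))
    (fun a b h => Subtype.ext (by simpa using h))

noncomputable instance : Fintype (SGen n) :=
  Fintype.ofInjective (fun a : SGen n => a.1) Subtype.val_injective

/-- The canonical finite set of generators below a partition. -/
noncomputable def genSet (I : Setoid (PM n)) : Finset (SGen n) :=
  @Finset.filter _ (fun a : SGen n => I a.1.1 a.1.2) (Classical.decPred _) Finset.univ

theorem mem_genSet {I : Setoid (PM n)} {a : SGen n} :
    a ∈ genSet I ↔ I a.1.1 a.1.2 := by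
  rw [genSet, @Finset.mem_filter _ _ (Classical.decPred _) Finset.univ a]
  simp

/-- The canonical word associated with a partition. -/
noncomputable def canon (I : Setoid (PM n)) : PresentedMonoid (SRel n) :=
  (genSet I).prod (fun a => PresentedMonoid.of (SRel n) a)

theorem absorb_prod {m : PresentedMonoid (SRel n)} (s : Finset (SGen n))
    (h : ∀ a ∈ s, m * PresentedMonoid.of (SRel n) a = m) :
    m * s.prod (fun a => PresentedMonoid.of (SRel n) a) = m := by
  classical
  induction s using Finset.induction_on with
  | empty => rw [Finset.prod_empty, mul_one]
  | insert a s ha ih =>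
    rw [Finset.prod_insert ha, ← mul_assoc, h a (Finset.mem_insert_self a s),
      ih (fun b hb => h b (Finset.mem_insert_of_mem hb))]

theorem absorb_word {m : PresentedMonoid (SRel n)} (u : FreeMonoid (SGen n))
    (h : ∀ b ∈ u.toList, m * PresentedMonoid.of (SRel n) b = m) :
    m * PresentedMonoid.mk (SRel n) u = m := by
  induction u using FreeMonoid.inductionOn' with
  | one => rw [map_one, mul_one]
  | of_mul b v ih =>
    rw [map_mul, mk_of, ← mul_assoc, h b (by simp [FreeMonoid.toList_of_mul]),
      ih (fun c hc => h c (by simp [FreeMonoid.toList_of_mul, hc]))]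

theorem letter_le {u : FreeMonoid (SGen n)} {b : SGen n} (h : b ∈ u.toList) :
    epsf b ≤ FreeMonoid.lift epsf u := by
  induction u using FreeMonoid.inductionOn' with
  | one => exact absurd h List.not_mem_nil
  | of_mul c v ih =>
    rw [FreeMonoid.toList_of_mul, List.mem_cons] at h
    rw [map_mul, FreeMonoid.lift_eval_of, setoid_mul_def]
    rcases h with rfl | h
    · exact le_sup_left
    · exact le_trans (ih h) le_sup_right

theorem prod_epsf_le {I : Setoid (PM n)} (s : Finset (SGen n))
    (h : ∀ a ∈ s, epsf a ≤ I) :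
    s.prod (fun a => epsf a) ≤ I := by
  classical
  induction s using Finset.induction_on with
  | empty => rw [Finset.prod_empty]; exact bot_le
  | insert a s ha ih =>
    rw [Finset.prod_insert ha, setoid_mul_def, sup_le_iff]
    exact ⟨h a (Finset.mem_insert_self a s), ih (fun b hb => h b (Finset.mem_insert_of_mem hb))⟩

theorem single_le_prod_setoid {s : Finset (SGen n)} {a : SGen n} (ha : a ∈ s) :
    epsf a ≤ s.prod (fun a => epsf a) := by
  classical
  rw [← Finset.mul_prod_erase s _ ha]
  exact (le_sup_left : epsf a ≤ epsf a ⊔ (s.erase a).prod (fun a => epsf a))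

theorem mk_eq_canon (u : FreeMonoid (SGen n)) :
    PresentedMonoid.mk (SRel n) u = canon (FreeMonoid.lift epsf u) := by
  set I := FreeMonoid.lift epsf u with hI
  have h1 : PresentedMonoid.mk (SRel n) u * canon I = PresentedMonoid.mk (SRel n) u := by
    apply absorb_prod
    intro a ha
    rw [mem_genSet] at ha
    have hlt : a.1.1 < a.1.2 := a.2
    have hne : a.1.1 ≠ a.1.2 := ne_of_lt hlt
    have heqv : Relation.EqvGen (wordRel u) a.1.1 a.1.2 := by
      have : I a.1.1 a.1.2 := ha
      rw [hI, lift_epsf_eq] at this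
      exact this
    have := P_absorb heqv hne
    rwa [gsym_of hlt] at this
  have h2 : canon I * PresentedMonoid.mk (SRel n) u = canon I := by
    apply absorb_word
    intro b hb
    have hbI : I b.1.1 b.1.2 := rel_of_le (letter_le hb) (eps_rel_self b.1.1 b.1.2)
    have hbs : b ∈ genSet I := mem_genSet.mpr hbI
    rw [canon, ← Finset.mul_prod_erase _ _ hbs, mul_right_comm, P_of_idem]
  calc PresentedMonoid.mk (SRel n) u = PresentedMonoid.mk (SRel n) u * canon I := h1.symm
    _ = canon I * PresentedMonoid.mk (SRel n) u := mul_comm _ _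
    _ = canon I := h2

theorem phi_injective : Function.Injective (phi (n := n)) := by
  intro x y h
  obtain ⟨u, rfl⟩ := PresentedMonoid.surjective_mk x
  obtain ⟨v, rfl⟩ := PresentedMonoid.surjective_mk y
  have hu : phi (PresentedMonoid.mk (SRel n) u) = FreeMonoid.lift epsf u := rfl
  have hv : phi (PresentedMonoid.mk (SRel n) v) = FreeMonoid.lift epsf v := rfl
  rw [mk_eq_canon u, mk_eq_canon v, ← hu, ← hv, h]

theorem phi_canon {I : Setoid (PM n)} (hI : IsSigned I) : phi (canon I) = I := by
  rw [canon, map_prod]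
  have hof : ∀ a : SGen n, phi (PresentedMonoid.of (SRel n) a) = epsf a := fun a => rfl
  simp only [hof]
  apply le_antisymm
  · apply prod_epsf_le
    intro a ha
    rw [mem_genSet] at ha
    exact eps_le_of ha ((hI a.1.1 a.1.2).mp ha)
  · rw [Setoid.le_def]
    intro x y hxy
    rcases lt_trichotomy x y with h | h | h
    · have ha : (⟨(x, y), h⟩ : SGen n) ∈ genSet I := mem_genSet.mpr hxy
      exact rel_of_le (single_le_prod_setoid ha) (eps_rel_self x y)
    · subst h; exact (genSet I).prod (fun a => epsf a) |>.refl x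
    · have ha : (⟨(y, x), h⟩ : SGen n) ∈ genSet I := mem_genSet.mpr (I.symm' hxy)
      exact ((genSet I).prod (fun a => epsf a)).symm'
        (rel_of_le (single_le_prod_setoid ha) (eps_rel_self y x))

theorem phi_range : Set.range (phi (n := n)) = {I | IsSigned I} := by
  ext I
  constructor
  · rintro ⟨x, rfl⟩
    exact isSigned_phi x
  · intro hI
    exact ⟨canon I, phi_canon hI⟩

end Canon
/-- The monoid presented by the generators `e_{i,j}` (for `i < j` in
`[±n]`) subject to relations (SP1)–(SP4) is isomorphic to the monoid `SPₙ` of signed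
partitions of `[±n]`, via an isomorphism sending `e_{i,j}` to `ε_{i,j}`: concretely,
there is an injective monoid homomorphism into the partition monoid of `[±n]` whose
range is exactly the set of signed partitions and which maps `e_{i,j}` to `ε_{i,j}`. -/
theorem presentedMonoid_isomorphic_SPn (n : ℕ) (hn : 2 ≤ n) :
    ∃ φ : PresentedMonoid (SRel n) →* Setoid (PM n),
      Function.Injective φ ∧
      Set.range φ = {I | IsSigned I} ∧
      ∀ a : SGen n, φ (PresentedMonoid.of (SRel n) a) = eps a.1.1 a.1.2 := by
  exact ⟨phi, phi_injective, phi_range, fun a => rfl⟩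
end

section
/- Let n ≥ 2 and let Q be the set of pairs (μ_{i,j}, μ_{−j,−i}) for i < j in [±n]. If X and Y are nonempty subsets of [±n] such that μ_{−X} ⊔ μ_X = μ_{−Y} ⊔ μ_Y, then the pair (μ_X, μ_Y) lies in the congruence on the partition monoid of [±n] generated by Q. -/
/-- The set `Q` of pairs `(μ_{i,j}, μ_{-j,-i})` for `i < j` in `[±n]`, viewed as a binary
relation on the partition monoid of `[±n]`. -/
def QRel (n : ℕ) : Setoid (PM n) → Setoid (PM n) → Prop := fun a b =>
  ∃ i j : PM n, i < j ∧ a = mu i j ∧ b = mu (PM.neg j) (PM.neg i)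

instance PM.instFinite (n : ℕ) : Finite (PM n) := by
  have : ∀ x : PM n, x.1 ∈ Set.Icc (-(n : ℤ)) n := by
    rintro ⟨x, hx1, hx2⟩
    simp only [Set.mem_Icc]
    rw [abs_le] at hx2
    exact hx2
  exact Finite.of_injective (fun x : PM n => (⟨x.1, this x⟩ : Set.Icc (-(n : ℤ)) n))
    (fun a b hab => Subtype.ext (by simpa using congrArg Subtype.val hab))

theorem muSet_rel_of_mem {α : Type*} {X : Set α} {x y : α} (hx : x ∈ X) (hy : y ∈ X) :
    muSet X x y :=
  Relation.EqvGen.rel x y ⟨hx, hy⟩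

theorem muSet_mono {α : Type*} {X Y : Set α} (h : X ⊆ Y) : muSet X ≤ muSet Y :=
  Setoid.eqvGen_le fun _ _ hr => muSet_rel_of_mem (h hr.1) (h hr.2)

theorem muSet_singleton {α : Type*} (a : α) : muSet {a} = (⊥ : Setoid α) := by
  refine le_antisymm (Setoid.eqvGen_le fun x y hr => ?_) bot_le
  have : x = y := by
    obtain ⟨hx, hy⟩ := hr
    simp only [Set.mem_singleton_iff] at hx hy
    rw [hx, hy]
  exact this ▸ (⊥ : Setoid α).refl' x

theorem mu_comm {α : Type*} (a b : α) : mu a b = mu b a := by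
  unfold mu
  rw [Set.pair_comm]

theorem muSet_insert {α : Type*} {X : Set α} (a : α) {b : α} (hb : b ∈ X) :
    muSet (insert a X) = mu a b ⊔ muSet X := by
  refine le_antisymm (Setoid.eqvGen_le fun x y hr => ?_) ?_
  · obtain ⟨hx, hy⟩ := hr
    have key : ∀ z ∈ insert a X, (mu a b ⊔ muSet X) a z := by
      intro z hz
      rcases Set.mem_insert_iff.mp hz with h' | hz
      · rw [h']
      · refine (mu a b ⊔ muSet X).trans'
          (Setoid.le_def.mp le_sup_left
            (muSet_rel_of_mem (Set.mem_insert a {b}) (Set.mem_insert_of_mem a rfl)))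
          (Setoid.le_def.mp le_sup_right (muSet_rel_of_mem hb hz))
    exact (mu a b ⊔ muSet X).trans' ((mu a b ⊔ muSet X).symm' (key x hx)) (key y hy)
  · refine sup_le (muSet_mono ?_) (muSet_mono (Set.subset_insert a X))
    intro z hz
    rcases hz with h' | h'
    · rw [h']
      exact Set.mem_insert a X
    · rw [Set.mem_singleton_iff.mp h']
      exact Set.mem_insert_of_mem a hb

theorem negSet_insert {n : ℕ} (a : PM n) (S : Set (PM n)) :
    negSet (insert a S) = insert a.neg (negSet S) := by
  unfold negSet
  rw [Set.image_insert_eq]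

theorem mul_eq_sup {α : Type*} (a b : Setoid α) : a * b = a ⊔ b := rfl

theorem conGen_mu_neg (n : ℕ) (i j : PM n) :
    conGen (QRel n) (mu i j) (mu i.neg j.neg) := by
  rcases lt_trichotomy i j with hij | rfl | hij
  · have := ConGen.Rel.of (r := QRel n) _ _ ⟨i, j, hij, rfl, rfl⟩
    rwa [mu_comm j.neg i.neg] at this
  · have h1 : mu i i = (⊥ : Setoid (PM n)) := by
      unfold mu
      rw [Set.pair_eq_singleton]
      exact muSet_singleton i
    have h2 : mu i.neg i.neg = (⊥ : Setoid (PM n)) := by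
      unfold mu
      rw [Set.pair_eq_singleton]
      exact muSet_singleton i.neg
    rw [h1, h2]
    exact ConGen.Rel.refl _
  · have := ConGen.Rel.of (r := QRel n) _ _ ⟨j, i, hij, rfl, rfl⟩
    rw [mu_comm j i] at this
    exact this

theorem conGen_muSet_negSet (n : ℕ) (X : Set (PM n)) (hX : X.Nonempty) :
    conGen (QRel n) (muSet X) (muSet (negSet X)) := by
  revert hX
  refine Set.Finite.induction_on (motive := fun X _ => X.Nonempty →
      conGen (QRel n) (muSet X) (muSet (negSet X)))
    X (Set.toFinite X) (fun h => absurd h (by simp)) ?_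
  intro a S haS hS IH hX
  rcases S.eq_empty_or_nonempty with rfl | hSne
  · rw [show insert a (∅ : Set (PM n)) = {a} by simp,
      show negSet ({a} : Set (PM n)) = {a.neg} by simp [negSet],
      muSet_singleton, muSet_singleton]
    exact ConGen.Rel.refl _
  · obtain ⟨b, hb⟩ := hSne
    have hbneg : b.neg ∈ negSet S := ⟨b, hb, rfl⟩
    rw [muSet_insert a hb, negSet_insert, muSet_insert a.neg hbneg,
      ← mul_eq_sup, ← mul_eq_sup]
    exact ConGen.Rel.mul (conGen_mu_neg n a b) (IH ⟨b, hb⟩)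

theorem conGen_muSet_eps (n : ℕ) (X : Set (PM n)) (hX : X.Nonempty) :
    conGen (QRel n) (muSet X) (muSet (negSet X) ⊔ muSet X) := by
  have h1 := ConGen.Rel.mul (conGen_muSet_negSet n X hX) (ConGen.Rel.refl (muSet X))
  rw [mul_eq_sup, mul_eq_sup, sup_idem] at h1
  exact h1

/-- If `X, Y` are nonempty subsets of `[±n]` with
`μ_{-X} ⊔ μ_X = μ_{-Y} ⊔ μ_Y`, then `(μ_X, μ_Y)` lies in the congruence generated
by `Q`. -/
theorem mu_conGen_Q_of_eps_eq (n : ℕ) (hn : 2 ≤ n) (X Y : Set (PM n))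
    (hX : X.Nonempty) (hY : Y.Nonempty)
    (h : muSet (negSet X) ⊔ muSet X = muSet (negSet Y) ⊔ muSet Y) :
    conGen (QRel n) (muSet X) (muSet Y) := by
  have h1 := conGen_muSet_eps n X hX
  have h2 := conGen_muSet_eps n Y hY
  rw [h] at h1
  exact ConGen.Rel.trans h1 (ConGen.Rel.symm h2)
end
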